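/- arXiv:2510.19601 — 2 statements merged into one kernel-verified Lean document; each statement's English description precedes it below -/
import Mathlib

section
/- For p ≥ 3, the complete multipartite graph K'_{2p} with p parts each of size two (the cocktail party graph) has exactly C(p,2) + 1 distinct lines. -/
open scoped Classical

namespace ChenChvatal

variable {V : Type*}

/-- `G` has diameter exactly two: some pair of distinct vertices is non-adjacent,
and any two distinct non-adjacent vertices have a common neighbor. -/
def DiamTwo (G : SimpleGraph V) : Prop :=
  (∃ x y : V, x ≠ y ∧ ¬ G.Adj x y) ∧
    ∀ x y : V, x ≠ y → ¬ G.Adj x y → ∃ z, G.Adj x z ∧ G.Adj z y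

/-- The line of a diameter-two graph defined by two vertices. -/
noncomputable def line (G : SimpleGraph V) (x y : V) : Set V :=
  if G.Adj x y then {x, y} ∪ symmDiff (G.neighborSet x) (G.neighborSet y)
  else {x, y} ∪ (G.neighborSet x ∩ G.neighborSet y)

/-- The set of all lines of a graph. -/
def lines (G : SimpleGraph V) : Set (Set V) :=
  {ℓ | ∃ x y : V, x ≠ y ∧ ℓ = line G x y}

/-- The set of non-neighbors of `x`, other than `x` itself. -/
def N2 (G : SimpleGraph V) (x : V) : Set V := {u | u ≠ x ∧ ¬ G.Adj x u}


/-- Two copies of `K_p` joined by a perfect matching. -/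
def M (p : ℕ) : SimpleGraph (Fin p ⊕ Fin p) where
  Adj u v :=
    match u, v with
    | Sum.inl i, Sum.inl j => i ≠ j
    | Sum.inr i, Sum.inr j => i ≠ j
    | Sum.inl i, Sum.inr j => i = j
    | Sum.inr i, Sum.inl j => i = j
  symm := ⟨by rintro (i | i) (j | j) h <;> exact h.symm⟩
  loopless := ⟨by rintro (i | i) h <;> exact h rfl⟩

/-- `K_{1,2,2}` minus an edge incident to the degree-four vertex `4`;
vertices `0,2` and `1,3` are the parts of size two. -/
def K122' : SimpleGraph (Fin 5) :=
  SimpleGraph.fromEdgeSet {s(0,1), s(0,3), s(2,1), s(2,3), s(2,4), s(1,4), s(3,4)}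

/-- The house graph: five-cycle `0 1 2 3 4` with the chord `{1,4}`. -/
def house : SimpleGraph (Fin 5) :=
  SimpleGraph.fromEdgeSet {s(0,1), s(1,2), s(2,3), s(3,4), s(4,0), s(1,4)}

/-- The non-neighbor ("mate") involution on `Fin q ⊕ Fin p × Fin 2`. -/
def mate (q p : ℕ) : (Fin q ⊕ Fin p × Fin 2) → (Fin q ⊕ Fin p × Fin 2)
  | Sum.inl j => Sum.inl j
  | Sum.inr (i, k) => Sum.inr (i, k + 1)

lemma mate_invol (q p : ℕ) : Function.Involutive (mate q p) := by
  rintro (j | ⟨i, k⟩)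
  · rfl
  · show Sum.inr (i, k + 1 + 1) = Sum.inr (i, k)
    have h : (1 : Fin 2) + 1 = 0 := rfl
    rw [add_assoc, h, add_zero]

/-- The complete multipartite graph with `q` parts of size one and `p` parts of size two. -/
def Kqp (q p : ℕ) : SimpleGraph (Fin q ⊕ Fin p × Fin 2) where
  Adj u v := u ≠ v ∧ v ≠ mate q p u
  symm := by
    constructor
    rintro u v ⟨h1, h2⟩
    refine ⟨h1.symm, fun h => h2 ?_⟩
    rw [h]
    exact (mate_invol q p v).symm
  loopless := ⟨fun u h => h.1 rfl⟩


section Aux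

variable {p : ℕ}

lemma fin2_cases (k c : Fin 2) : c = k ∨ c = k + 1 := by revert k c; decide

abbrev VV (p : ℕ) := Fin 0 ⊕ Fin p × Fin 2

lemma eq_inr (u : VV p) : ∃ i k, u = Sum.inr (i, k) := by
  rcases u with j | ⟨i, k⟩
  · exact j.elim0
  · exact ⟨i, k, rfl⟩

lemma mate_inr (i : Fin p) (k : Fin 2) :
    mate 0 p (Sum.inr (i, k)) = Sum.inr (i, k + 1) := rfl

lemma mate_ne (u : VV p) : mate 0 p u ≠ u := by
  obtain ⟨i, k, rfl⟩ := eq_inr u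
  rw [mate_inr]
  intro h
  have h2 : k + 1 = k := by injection h with h'; exact congrArg Prod.snd h'
  have hk : ∀ k : Fin 2, k + 1 ≠ k := by decide
  exact hk k h2

lemma adj_iff {u v : VV p} : (Kqp 0 p).Adj u v ↔ u ≠ v ∧ v ≠ mate 0 p u := Iff.rfl

def pt (p : ℕ) (i : Fin p) : Set (VV p) := {Sum.inr (i, 0), Sum.inr (i, 1)}

lemma mem_pt {i j : Fin p} {c : Fin 2} : Sum.inr (i, c) ∈ pt p j ↔ i = j := by
  fin_cases c <;> simp [pt, Prod.ext_iff]

lemma pt_eq (i : Fin p) (k : Fin 2) :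
    pt p i = {Sum.inr (i, k), Sum.inr (i, k + 1)} := by
  fin_cases k <;> simp [pt, Set.pair_comm]

lemma line_nonadj (u : VV p) : line (Kqp 0 p) u (mate 0 p u) = Set.univ := by
  have hadj : ¬ (Kqp 0 p).Adj u (mate 0 p u) := fun h => h.2 rfl
  rw [line, if_neg hadj]
  ext w
  simp only [Set.mem_univ, iff_true]
  by_cases h1 : w = u
  · exact Or.inl (Or.inl h1)
  by_cases h2 : w = mate 0 p u
  · exact Or.inl (Or.inr h2)
  · refine Or.inr ⟨⟨fun h => h1 h.symm, h2⟩, ⟨fun h => h2 h.symm, ?_⟩⟩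
    rw [mate_invol 0 p u]
    exact h1

lemma line_adj (u v : VV p) (h : (Kqp 0 p).Adj u v) :
    line (Kqp 0 p) u v = {u, v, mate 0 p u, mate 0 p v} := by
  obtain ⟨huv, hv⟩ := h
  rw [line, if_pos (show (Kqp 0 p).Adj u v from ⟨huv, hv⟩)]
  ext w
  constructor
  · rintro (h | h)
    · rcases h with h | h
      · exact Or.inl h
      · exact Or.inr (Or.inl h)
    · rw [Set.mem_symmDiff] at h
      rcases h with ⟨h1, h2⟩ | ⟨h1, h2⟩
      · rw [SimpleGraph.mem_neighborSet, adj_iff] at h1 h2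
        push_neg at h2
        by_cases hwv : w = v
        · exact Or.inr (Or.inl hwv)
        · exact Or.inr (Or.inr (Or.inr (h2 (fun hh => hwv hh.symm))))
      · rw [SimpleGraph.mem_neighborSet, adj_iff] at h1 h2
        push_neg at h2
        by_cases hwu : w = u
        · exact Or.inl hwu
        · exact Or.inr (Or.inr (Or.inl (h2 (fun hh => hwu hh.symm))))
  · have hmateinj := (mate_invol 0 p).injective
    rintro (rfl | rfl | rfl | rfl)
    · exact Or.inl (Or.inl rfl)
    · exact Or.inl (Or.inr rfl)
    · -- w = mate u
      refine Or.inr ?_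
      rw [Set.mem_symmDiff]
      refine Or.inr ⟨?_, ?_⟩
      · rw [SimpleGraph.mem_neighborSet, adj_iff]
        exact ⟨fun hh => hv hh, fun hh => huv (hmateinj hh)⟩
      · rw [SimpleGraph.mem_neighborSet, adj_iff]
        push_neg
        intro _; rfl
    · -- w = mate v
      refine Or.inr ?_
      rw [Set.mem_symmDiff]
      refine Or.inl ⟨?_, ?_⟩
      · rw [SimpleGraph.mem_neighborSet, adj_iff]
        refine ⟨fun hh => hv ?_, fun hh => huv (hmateinj hh.symm)⟩
        rw [hh, mate_invol]
      · rw [SimpleGraph.mem_neighborSet, adj_iff]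
        push_neg
        intro _; rfl

noncomputable def gmap (p : ℕ) : Sym2 (Fin p) → Set (VV p) :=
  Sym2.lift ⟨fun i j => pt p i ∪ pt p j, fun i j => Set.union_comm _ _⟩

lemma gmap_mk (i j : Fin p) : gmap p s(i, j) = pt p i ∪ pt p j := rfl

lemma quad_eq (i j : Fin p) (k l : Fin 2) (hij : i ≠ j) :
    ({Sum.inr (i, k), Sum.inr (j, l), Sum.inr (i, k + 1), Sum.inr (j, l + 1)} :
      Set (VV p)) = pt p i ∪ pt p j := by
  rw [pt_eq i k, pt_eq j l]
  ext w
  simp only [Set.mem_insert_iff, Set.mem_singleton_iff, Set.mem_union]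
  tauto

lemma lines_eq (hp : 3 ≤ p) :
    lines (Kqp 0 p) = insert Set.univ (gmap p '' {s : Sym2 (Fin p) | ¬ s.IsDiag}) := by
  ext ℓ
  constructor
  · rintro ⟨u, v, huv, rfl⟩
    obtain ⟨i, k, rfl⟩ := eq_inr u
    obtain ⟨j, l, rfl⟩ := eq_inr v
    by_cases hij : i = j
    · subst hij
      have hkl : k ≠ l := by
        intro h; subst h; exact huv rfl
      have hl : l = k + 1 := (fin2_cases k l).resolve_left hkl.symm
      subst hl
      rw [← mate_inr, line_nonadj]
      exact Or.inl rfl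
    · have hadj : (Kqp 0 p).Adj (Sum.inr (i, k)) (Sum.inr (j, l)) := by
        rw [adj_iff, mate_inr]
        refine ⟨huv, fun h => hij ?_⟩
        injection h with h'
        exact (congrArg Prod.fst h').symm
      rw [line_adj _ _ hadj, mate_inr, mate_inr]
      refine Or.inr ⟨s(i, j), ?_, ?_⟩
      · simpa using hij
      · rw [gmap_mk]
        exact (quad_eq i j k l hij).symm
  · rintro (rfl | ⟨s, hs, hℓ⟩)
    · refine ⟨Sum.inr (⟨0, by omega⟩, 0), mate 0 p (Sum.inr (⟨0, by omega⟩, 0)),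
        (mate_ne _).symm, (line_nonadj _).symm⟩
    · subst hℓ
      revert hs
      induction s using Sym2.ind with
      | _ i j =>
        intro hs
        have hij : i ≠ j := by simpa using hs
        have hadj : (Kqp 0 p).Adj (Sum.inr (i, 0)) (Sum.inr (j, 0)) := by
          rw [adj_iff, mate_inr]
          constructor
          · intro h; rw [Sum.inr.injEq, Prod.mk.injEq] at h; exact hij h.1
          · intro h; rw [Sum.inr.injEq, Prod.mk.injEq] at h; exact hij h.1.symm
        refine ⟨Sum.inr (i, 0), Sum.inr (j, 0), hadj.1, ?_⟩
        rw [line_adj _ _ hadj, mate_inr, mate_inr, gmap_mk]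
        exact (quad_eq i j 0 0 hij).symm

lemma univ_not_mem (hp : 3 ≤ p) :
    Set.univ ∉ gmap p '' {s : Sym2 (Fin p) | ¬ s.IsDiag} := by
  rintro ⟨s, hs, hℓ⟩
  revert hs hℓ
  induction s using Sym2.ind with
  | _ i j =>
    intro hs hℓ
    rw [gmap_mk] at hℓ
    have hcompl : (({i, j} : Finset (Fin p))ᶜ).Nonempty := by
      rw [← Finset.card_pos, Finset.card_compl]
      have h1 : ({i, j} : Finset (Fin p)).card ≤ 2 :=
        (Finset.card_insert_le _ _).trans (by simp)
      have h2 : Fintype.card (Fin p) = p := Fintype.card_fin p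
      omega
    obtain ⟨m, hm⟩ := hcompl
    simp only [Finset.mem_compl, Finset.mem_insert, Finset.mem_singleton] at hm
    push_neg at hm
    have : (Sum.inr (m, 0) : VV p) ∈ pt p i ∪ pt p j := by rw [hℓ]; trivial
    rcases this with h | h
    · exact hm.1 (mem_pt.mp h)
    · exact hm.2 (mem_pt.mp h)

lemma gmap_injOn : Set.InjOn (gmap p) {s : Sym2 (Fin p) | ¬ s.IsDiag} := by
  intro a ha b hb hab
  revert ha hb hab
  induction a using Sym2.ind with
  | _ i j =>
    induction b using Sym2.ind with
    | _ k l =>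
      intro ha hb hab
      have hij : i ≠ j := by simpa using ha
      have hkl : k ≠ l := by simpa using hb
      rw [gmap_mk, gmap_mk] at hab
      have hi : i = k ∨ i = l := by
        have : (Sum.inr (i, 0) : VV p) ∈ pt p k ∪ pt p l := by
          rw [← hab]; exact Or.inl (mem_pt.mpr rfl)
        rcases this with h | h
        · exact Or.inl (mem_pt.mp h)
        · exact Or.inr (mem_pt.mp h)
      have hj : j = k ∨ j = l := by
        have : (Sum.inr (j, 0) : VV p) ∈ pt p k ∪ pt p l := by
          rw [← hab]; exact Or.inr (mem_pt.mpr rfl)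
        rcases this with h | h
        · exact Or.inl (mem_pt.mp h)
        · exact Or.inr (mem_pt.mp h)
      rw [Sym2.eq_iff]
      rcases hi with rfl | rfl
      · rcases hj with rfl | rfl
        · exact absurd rfl hij
        · exact Or.inl ⟨rfl, rfl⟩
      · rcases hj with rfl | rfl
        · exact Or.inr ⟨rfl, rfl⟩
        · exact absurd rfl hij

lemma ncard_not_diag : ({s : Sym2 (Fin p) | ¬ s.IsDiag}).ncard = p.choose 2 := by
  have h := Sym2.card_subtype_not_diag (α := Fin p)
  rw [Fintype.card_fin] at h
  rw [← Nat.card_coe_set_eq, Nat.card_eq_fintype_card, ← h]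
  exact Fintype.card_congr (Equiv.subtypeEquivRight fun _ => Iff.rfl)

end Aux

/-- For `p ≥ 3`, the cocktail party graph `K'_{2p}` (the complete multipartite
graph with `p` parts of size two, here `Kqp 0 p`) has exactly `C(p,2) + 1` lines. -/
theorem stmt9 (p : ℕ) (hp : 3 ≤ p) :
    (lines (Kqp 0 p)).ncard = p.choose 2 + 1 := by
  rw [lines_eq hp, Set.ncard_insert_of_notMem (univ_not_mem hp),
    Set.ncard_image_of_injOn gmap_injOn, ncard_not_diag]

end ChenChvatal
end

section
/- Let G be the graph on vertex set {u_1,...,u_q} ∪ {v_1,v'_1,...,v_p,v'_p} (p ≥ 1) where all pairs are adjacent except each pair v_i, v'_i. If (p,q) ∉ {(1,1),(2,0)}, then G has exactly p(p−1)/2 + q(q−1)/2 + pq + 1 distinct lines. -/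
open scoped Classical

namespace ChenChvatal

variable {V : Type*}

/-- projection to the parts -/
def pf (q p : ℕ) : (Fin q ⊕ Fin p × Fin 2) → (Fin q ⊕ Fin p)
  | Sum.inl j => Sum.inl j
  | Sum.inr (i, _) => Sum.inr i

lemma pf_surj (q p : ℕ) : Function.Surjective (pf q p) := by
  rintro (j | i)
  · exact ⟨Sum.inl j, rfl⟩
  · exact ⟨Sum.inr (i, 0), rfl⟩

lemma pf_mate (q p : ℕ) (x : Fin q ⊕ Fin p × Fin 2) : pf q p (mate q p x) = pf q p x := by
  rcases x with j | ⟨i, k⟩ <;> rfl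

lemma fiber (q p : ℕ) (x : Fin q ⊕ Fin p × Fin 2) :
    pf q p ⁻¹' {pf q p x} = {x, mate q p x} := by
  have hk : ∀ k k' : Fin 2, k' = k ∨ k' = k + 1 := by decide
  ext z
  rcases x with j | ⟨i, k⟩ <;> rcases z with j' | ⟨i', k'⟩ <;>
    simp [pf, mate, Prod.ext_iff]
  constructor
  · rintro rfl
    rcases hk k k' with h | h
    · exact Or.inl ⟨rfl, h⟩
    · exact Or.inr ⟨rfl, h⟩
  · rintro (⟨rfl, _⟩ | ⟨rfl, _⟩) <;> rfl

lemma adj_iff_s12 (q p : ℕ) (x y : Fin q ⊕ Fin p × Fin 2) :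
    (Kqp q p).Adj x y ↔ x ≠ y ∧ y ≠ mate q p x := Iff.rfl

lemma nbhd (q p : ℕ) (x : Fin q ⊕ Fin p × Fin 2) :
    (Kqp q p).neighborSet x = ({x, mate q p x} : Set _)ᶜ := by
  ext z
  simp only [SimpleGraph.mem_neighborSet, adj_iff_s12, Set.mem_compl_iff, Set.mem_insert_iff,
    Set.mem_singleton_iff]
  constructor
  · rintro ⟨h1, h2⟩ (rfl | rfl)
    · exact h1 rfl
    · exact h2 rfl
  · intro h
    push_neg at h
    exact ⟨fun e => h.1 e.symm, h.2⟩

lemma line_adj_s12 (q p : ℕ) (x y : Fin q ⊕ Fin p × Fin 2) (h : (Kqp q p).Adj x y) :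
    line (Kqp q p) x y = pf q p ⁻¹' {pf q p x, pf q p y} := by
  obtain ⟨hxy, hym⟩ := h
  have hxm : x ≠ mate q p y := fun e => hym (by rw [e, mate_invol])
  have hmm : mate q p x ≠ mate q p y := fun e => hxy ((mate_invol q p).injective e)
  have hdisj : Disjoint ({x, mate q p x} : Set _) {y, mate q p y} := by
    rw [Set.disjoint_left]
    rintro a (rfl | rfl) (h | h)
    · exact hxy h
    · exact hxm h
    · exact hym h.symm
    · exact hmm h
  have hline : line (Kqp q p) x y
      = {x, y} ∪ symmDiff ((Kqp q p).neighborSet x) ((Kqp q p).neighborSet y) := by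
    rw [line]
    split_ifs with hc
    · rfl
    · exact absurd ⟨hxy, hym⟩ hc
  rw [hline, nbhd, nbhd, compl_symmDiff_compl, hdisj.symmDiff_eq_sup]
  have hpre : pf q p ⁻¹' {pf q p x, pf q p y} = ({x, mate q p x} : Set _) ∪ {y, mate q p y} := by
    have h2 : ({pf q p x, pf q p y} : Set (Fin q ⊕ Fin p)) = {pf q p x} ∪ {pf q p y} := by
      exact Set.insert_eq _ _
    rw [h2, Set.preimage_union, fiber, fiber]
  rw [hpre]
  ext z
  simp only [Set.mem_union, Set.mem_insert_iff, Set.mem_singleton_iff, Set.sup_eq_union]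
  tauto

lemma line_nonadj_s12 (q p : ℕ) (x y : Fin q ⊕ Fin p × Fin 2) (hxy : x ≠ y)
    (h : ¬ (Kqp q p).Adj x y) : line (Kqp q p) x y = Set.univ := by
  rw [adj_iff_s12] at h
  push_neg at h
  have hy : y = mate q p x := h hxy
  have hline : line (Kqp q p) x y
      = {x, y} ∪ ((Kqp q p).neighborSet x ∩ (Kqp q p).neighborSet y) := by
    rw [line]
    split_ifs with hc
    · exact absurd hy hc.2
    · rfl
  rw [hline, nbhd, nbhd]
  subst hy
  rw [mate_invol, Set.pair_comm (mate q p x) x, Set.inter_self, Set.union_compl_self]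

lemma pf_eq_cases (q p : ℕ) (x y : Fin q ⊕ Fin p × Fin 2) (h : pf q p x = pf q p y) :
    y = x ∨ y = mate q p x := by
  have : y ∈ pf q p ⁻¹' {pf q p x} := by simp [h.symm]
  rw [fiber] at this
  simpa using this

lemma lines_eq_s12 (q p : ℕ) (hp : 1 ≤ p) :
    lines (Kqp q p)
      = insert Set.univ
          ((fun t : Finset (Fin q ⊕ Fin p) => pf q p ⁻¹' ↑t) ''
            {t : Finset (Fin q ⊕ Fin p) | t.card = 2}) := by
  ext ℓ
  constructor
  · rintro ⟨x, y, hxy, rfl⟩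
    by_cases h : (Kqp q p).Adj x y
    · right
      refine ⟨{pf q p x, pf q p y}, ?_, ?_⟩
      · have hne : pf q p x ≠ pf q p y := by
          intro e
          rcases pf_eq_cases q p x y e with rfl | rfl
          · exact hxy rfl
          · exact h.2 rfl
        simp [Finset.card_insert_of_notMem, hne]
      · rw [line_adj_s12 q p x y h]
        simp
    · left
      exact line_nonadj_s12 q p x y hxy h
  · rintro (rfl | ⟨t, ht, rfl⟩)
    · have i0 : Fin p := ⟨0, hp⟩
      refine ⟨Sum.inr (i0, 0), Sum.inr (i0, 1), ?_, ?_⟩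
      · simp
      · refine (line_nonadj_s12 q p _ _ (by simp) ?_).symm
        rw [adj_iff_s12]
        push_neg
        intro _
        rfl
    · obtain ⟨a, b, hab, rfl⟩ := Finset.card_eq_two.mp ht
      obtain ⟨x, rfl⟩ := pf_surj q p a
      obtain ⟨y, rfl⟩ := pf_surj q p b
      have hadj : (Kqp q p).Adj x y := by
        rw [adj_iff_s12]
        constructor
        · rintro rfl; exact hab rfl
        · rintro rfl; exact hab (pf_mate q p x).symm
      refine ⟨x, y, hadj.ne, ?_⟩
      rw [line_adj_s12 q p x y hadj]
      simp

lemma arith (p q : ℕ) : (q + p).choose 2 = p * (p - 1) / 2 + q * (q - 1) / 2 + p * q := by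
  rw [Nat.choose_two_right]
  rcases p with _ | p
  · simp
  rcases q with _ | q
  · simp
  obtain ⟨a, ha⟩ := Nat.even_mul_succ_self p
  obtain ⟨b, hb⟩ := Nat.even_mul_succ_self q
  have e1 : (p + 1) * (p + 1 - 1) = p * (p + 1) := by
    rw [Nat.add_sub_cancel, Nat.mul_comm]
  have e2 : (q + 1) * (q + 1 - 1) = q * (q + 1) := by
    rw [Nat.add_sub_cancel, Nat.mul_comm]
  have e3 : (q + 1 + (p + 1)) * (q + 1 + (p + 1) - 1)
      = p * (p + 1) + q * (q + 1) + 2 * ((p + 1) * (q + 1)) := by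
    have h : q + 1 + (p + 1) - 1 = q + p + 1 := by omega
    rw [h]; ring
  rw [e3, e1, e2]
  omega

/-- The complete multipartite graph with `q` parts of size one and `p ≥ 1`
parts of size two has exactly `p(p-1)/2 + q(q-1)/2 + pq + 1` lines,
provided `(p,q) ∉ {(1,1),(2,0)}`. -/
theorem stmt12 (p q : ℕ) (hp : 1 ≤ p)
    (h1 : ¬(p = 1 ∧ q = 1)) (h2 : ¬(p = 2 ∧ q = 0)) :
    (lines (Kqp q p)).ncard
      = p * (p - 1) / 2 + q * (q - 1) / 2 + p * q + 1 := by
  rw [lines_eq_s12 q p hp]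
  set f : Finset (Fin q ⊕ Fin p) → Set (Fin q ⊕ Fin p × Fin 2) :=
    fun t => pf q p ⁻¹' ↑t with hf
  have hinj : Function.Injective f := fun s t h => by
    exact Finset.coe_injective ((pf_surj q p).preimage_injective h)
  have hcardW : Fintype.card (Fin q ⊕ Fin p) = q + p := by simp
  have huniv : Set.univ ∉ f '' {t : Finset (Fin q ⊕ Fin p) | t.card = 2} := by
    rintro ⟨t, ht, hteq⟩
    have : t = Finset.univ := by
      apply Finset.eq_univ_of_forall
      intro w
      obtain ⟨v, rfl⟩ := pf_surj q p w
      have : v ∈ f t := by rw [hteq]; trivial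
      exact this
    simp only [Set.mem_setOf_eq] at ht
    rw [this, Finset.card_univ, hcardW] at ht
    omega
  rw [Set.ncard_insert_of_notMem huniv (Set.toFinite _),
    Set.ncard_image_of_injOn (hinj.injOn)]
  have hset : {t : Finset (Fin q ⊕ Fin p) | t.card = 2}
      = ↑(Finset.powersetCard 2 (Finset.univ : Finset (Fin q ⊕ Fin p))) := by
    ext t
    simp [Finset.mem_powersetCard_univ]
  rw [hset, Set.ncard_coe_finset, Finset.card_powersetCard, Finset.card_univ, hcardW,
    arith p q]

end ChenChvatal
end
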